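/- Let (x, y, z) ∈ ℝ³ with 0 < κ < 4 satisfy x² + y² + z² = xyz + κ and -√κ < x < √κ. Then x² < 4, (x² - κ)/(x² - 4) > 0, and there exist θ, φ ∈ [0, 2π) with x = 2cos θ, y = 2√((x²-κ)/(x²-4))·cos φ, and z = 2√((x²-κ)/(x²-4))·cos(θ + φ). -/

import Mathlib

open Real

lemma exists_phi (a b : ℝ) (h : a ^ 2 + b ^ 2 = 1) :
    ∃ φ ∈ Set.Ico (0:ℝ) (2 * π), Real.cos φ = a ∧ Real.sin φ = b := by
  set c : ℂ := ⟨a, b⟩ with hc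
  have habs : ‖c‖ = 1 := by
    rw [Complex.norm_def, Complex.normSq_mk]
    have : a * a + b * b = 1 := by nlinarith
    rw [this, Real.sqrt_one]
  have hc0 : c ≠ 0 := by
    intro h0; rw [h0] at habs; simp at habs
  have hcos : Real.cos c.arg = a := by
    rw [Complex.cos_arg hc0, habs]; simp [hc]
  have hsin : Real.sin c.arg = b := by
    have := Complex.sin_arg c
    rw [habs] at this; simpa [hc] using this
  have harg := Complex.arg_mem_Ioc c
  obtain ⟨h1, h2⟩ := harg
  have hπ := Real.pi_pos
  by_cases hpos : 0 ≤ c.arg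
  · exact ⟨c.arg, ⟨hpos, by linarith⟩, hcos, hsin⟩
  · refine ⟨c.arg + 2 * π, ⟨by linarith, by linarith⟩, ?_, ?_⟩
    · rw [Real.cos_add_two_pi]; exact hcos
    · rw [Real.sin_add_two_pi]; exact hsin

/-- For `0 < κ < 4` and a real Markoff triple `(x, y, z)` with `-√κ < x < √κ`:
`x² < 4`, `(x² - κ)/(x² - 4) > 0`, and the triple admits the trigonometric
parameterization `x = 2 cos θ`, `y = 2 √((x²-κ)/(x²-4)) cos φ`,
`z = 2 √((x²-κ)/(x²-4)) cos(θ + φ)` for some `θ, φ ∈ [0, 2π)`. -/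
theorem stmt16 (κ x y z : ℝ) (hκ0 : 0 < κ) (hκ4 : κ < 4)
    (hM : x ^ 2 + y ^ 2 + z ^ 2 = x * y * z + κ)
    (hx1 : -Real.sqrt κ < x) (hx2 : x < Real.sqrt κ) :
    x ^ 2 < 4 ∧ 0 < (x ^ 2 - κ) / (x ^ 2 - 4) ∧
      ∃ θ φ : ℝ, θ ∈ Set.Ico 0 (2 * π) ∧ φ ∈ Set.Ico 0 (2 * π) ∧
        x = 2 * Real.cos θ ∧
        y = 2 * Real.sqrt ((x ^ 2 - κ) / (x ^ 2 - 4)) * Real.cos φ ∧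
        z = 2 * Real.sqrt ((x ^ 2 - κ) / (x ^ 2 - 4)) * Real.cos (θ + φ) := by
  have hsq : Real.sqrt κ ^ 2 = κ := Real.sq_sqrt hκ0.le
  have hxκ : x ^ 2 < κ := by nlinarith [Real.sqrt_nonneg κ]
  have h4 : x ^ 2 < 4 := by linarith
  have hden : x ^ 2 - 4 < 0 := by linarith
  have hnum : x ^ 2 - κ < 0 := by linarith
  have hratio : 0 < (x ^ 2 - κ) / (x ^ 2 - 4) := div_pos_of_neg_of_neg hnum hden
  refine ⟨h4, hratio, ?_⟩
  set q : ℝ := (x ^ 2 - κ) / (x ^ 2 - 4) with hqdef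
  set s : ℝ := Real.sqrt q with hsdef
  have hs2 : s ^ 2 = q := Real.sq_sqrt hratio.le
  have hspos : 0 < s := Real.sqrt_pos.mpr hratio
  have hq : q * (4 - x ^ 2) = κ - x ^ 2 := by
    rw [hqdef, div_mul_eq_mul_div, div_eq_iff hden.ne]
    ring
  have hπ := Real.pi_pos
  set θ : ℝ := Real.arccos (x / 2) with hθdef
  have hx2b : x / 2 ≤ 1 := by nlinarith
  have hx1b : -1 ≤ x / 2 := by nlinarith
  have hcosθ : Real.cos θ = x / 2 := Real.cos_arccos hx1b hx2b
  have hsin2 : Real.sin θ ^ 2 = 1 - x ^ 2 / 4 := by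
    rw [Real.sin_sq, hcosθ]; ring
  have hsinθpos : 0 < Real.sin θ := by
    rw [hθdef, Real.sin_arccos]
    apply Real.sqrt_pos.mpr
    nlinarith
  have hθmem : θ ∈ Set.Ico 0 (2 * π) :=
    ⟨Real.arccos_nonneg _, lt_of_le_of_lt (Real.arccos_le_pi _) (by linarith)⟩
  set a : ℝ := y / (2 * s) with hadef
  set b : ℝ := (x * y / 2 - z) / (2 * s * Real.sin θ) with hbdef
  have hsne : s ≠ 0 := hspos.ne'
  have hsinne : Real.sin θ ≠ 0 := hsinθpos.ne'
  have hab : a ^ 2 + b ^ 2 = 1 := by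
    rw [hadef, hbdef]
    have hk1 : (2 * s * Real.sin θ) ^ 2 = κ - x ^ 2 := by
      calc (2 * s * Real.sin θ) ^ 2 = 4 * s ^ 2 * Real.sin θ ^ 2 := by ring
        _ = 4 * q * (1 - x ^ 2 / 4) := by rw [hs2, hsin2]
        _ = q * (4 - x ^ 2) := by ring
        _ = κ - x ^ 2 := hq
    have hk2 : y ^ 2 * Real.sin θ ^ 2 + (x * y / 2 - z) ^ 2 = κ - x ^ 2 := by
      rw [hsin2]; linear_combination hM
    have hrw : (y / (2 * s)) ^ 2 + ((x * y / 2 - z) / (2 * s * Real.sin θ)) ^ 2 =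
        (y ^ 2 * Real.sin θ ^ 2 + (x * y / 2 - z) ^ 2) / (2 * s * Real.sin θ) ^ 2 := by
      field_simp
    rw [hrw, hk2, hk1, div_self (by linarith : κ - x ^ 2 ≠ 0)]
  obtain ⟨φ, hφmem, hcosφ, hsinφ⟩ := exists_phi a b hab
  refine ⟨θ, φ, hθmem, hφmem, by linarith [hcosθ], ?_, ?_⟩
  · rw [hcosφ, hadef]
    field_simp
  · rw [Real.cos_add, hcosθ, hcosφ, hsinφ, hadef, hbdef]
    field_simp
    ring
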